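/- Let X be a compact metric space and f : X → X continuous. Suppose there are nonempty closed sets K_0, K_1 ⊆ X and a point x ∈ X such that K_0 ∩ K_1 = {x}, K_0 ∪ K_1 ⊆ f(K_0) ∩ f(K_1), and f(x) ≠ x. Then f is separated 2-turbulent. -/
import Mathlib


open Set

/-- The n-th Mahavier product of a relation `F` on `X`: tuples `(x 0, …, x n)`
with `(x i, x (i+1)) ∈ F` for all `i < n`. -/
def Mahavier {X : Type*} (F : Set (X × X)) (n : ℕ) : Set (Fin (n + 1) → X) :=
  {x | ∀ i : Fin n, (x i.castSucc, x i.succ) ∈ F}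

/-- A witness of CR-turbulence at length parameter `n`. -/
def CRWitness {X : Type*} [TopologicalSpace X] (F : Set (X × X)) (n : ℕ) : Prop :=
  ∃ K L : Set (Fin (n + 1) → X),
    K.Nonempty ∧ L.Nonempty ∧ IsClosed K ∧ IsClosed L ∧
    K ⊆ Mahavier F n ∧ L ⊆ Mahavier F n ∧ Disjoint K L ∧
    ((fun x => x 0) '' K ∪ (fun x => x 0) '' L) ⊆
      ((fun x => x (Fin.last n)) '' K ∩ (fun x => x (Fin.last n)) '' L)

/-- A witness of reverse CR-turbulence at length parameter `n`. -/
def RevCRWitness {X : Type*} [TopologicalSpace X] (F : Set (X × X)) (n : ℕ) : Prop :=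
  ∃ K L : Set (Fin (n + 1) → X),
    K.Nonempty ∧ L.Nonempty ∧ IsClosed K ∧ IsClosed L ∧
    K ⊆ Mahavier F n ∧ L ⊆ Mahavier F n ∧ Disjoint K L ∧
    ((fun x => x (Fin.last n)) '' K ∪ (fun x => x (Fin.last n)) '' L) ⊆
      ((fun x => x 0) '' K ∩ (fun x => x 0) '' L)

/-- `F` is CR-turbulent. -/
def CRTurbulent {X : Type*} [TopologicalSpace X] (F : Set (X × X)) : Prop :=
  ∃ n : ℕ, 1 ≤ n ∧ CRWitness F n

/-- `F` is reverse CR-turbulent. -/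
def RevCRTurbulent {X : Type*} [TopologicalSpace X] (F : Set (X × X)) : Prop :=
  ∃ n : ℕ, 1 ≤ n ∧ RevCRWitness F n

/-- A self-map is separated turbulent. -/
def SepTurbulent {Z : Type*} [TopologicalSpace Z] (h : Z → Z) : Prop :=
  ∃ K L : Set Z, K.Nonempty ∧ L.Nonempty ∧ IsClosed K ∧ IsClosed L ∧
    Disjoint K L ∧ K ∪ L ⊆ h '' K ∩ h '' L

/-- A self-map is turbulent. -/
def Turbulent {Z : Type*} [TopologicalSpace Z] (h : Z → Z) : Prop :=
  ∃ K L : Set Z, K.Nonempty ∧ L.Nonempty ∧ IsClosed K ∧ IsClosed L ∧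
    (K ∩ L).Subsingleton ∧ K ∪ L ⊆ h '' K ∩ h '' L

/-- The infinite Mahavier product `X_F^+`. -/
def MahavierSeq {X : Type*} (F : Set (X × X)) : Set (ℕ → X) :=
  {x | ∀ i : ℕ, (x i, x (i + 1)) ∈ F}

/-- The shift map `σ_F^+` on `X_F^+`. -/
def shiftMap {X : Type*} (F : Set (X × X)) : MahavierSeq F → MahavierSeq F :=
  fun x => ⟨fun n => x.1 (n + 1), fun i => x.2 (i + 1)⟩

/-- If `f : X → X` is continuous on a compact metric space, `K₀, K₁` are
nonempty closed sets with `K₀ ∩ K₁ = {x}`, `K₀ ∪ K₁ ⊆ f(K₀) ∩ f(K₁)` and `f x ≠ x`, then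
`f` is separated 2-turbulent. -/
theorem stmt5 {X : Type*} [MetricSpace X] [CompactSpace X] (f : X → X) (hf : Continuous f)
    (K₀ K₁ : Set X) (h0ne : K₀.Nonempty) (h1ne : K₁.Nonempty)
    (h0c : IsClosed K₀) (h1c : IsClosed K₁) (x : X) (hx : K₀ ∩ K₁ = {x})
    (hsub : K₀ ∪ K₁ ⊆ f '' K₀ ∩ f '' K₁) (hfx : f x ≠ x) :
    SepTurbulent (f^[2]) := by
  refine ⟨K₀ ∩ f ⁻¹' K₀, K₁ ∩ f ⁻¹' K₁, ?_, ?_, h0c.inter (h0c.preimage hf),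
    h1c.inter (h1c.preimage hf), ?_, ?_⟩
  · obtain ⟨w, hw⟩ := h0ne
    obtain ⟨z, hz, hzw⟩ := (hsub (Or.inl hw)).1
    exact ⟨z, hz, by simpa [hzw] using hw⟩
  · obtain ⟨w, hw⟩ := h1ne
    obtain ⟨z, hz, hzw⟩ := (hsub (Or.inr hw)).2
    exact ⟨z, hz, by simpa [hzw] using hw⟩
  · rw [Set.disjoint_left]
    rintro z ⟨hz0, hz0'⟩ ⟨hz1, hz1'⟩
    have hzx : z = x := by
      have : z ∈ K₀ ∩ K₁ := ⟨hz0, hz1⟩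
      rwa [hx, Set.mem_singleton_iff] at this
    have : f z ∈ K₀ ∩ K₁ := ⟨hz0', hz1'⟩
    rw [hx, Set.mem_singleton_iff, hzx] at this
    exact hfx this
  · -- K ∪ L ⊆ K₀ ∪ K₁, so it suffices to show K₀ ∪ K₁ ⊆ f² '' K ∩ f² '' L
    intro w hw
    have hw' : w ∈ K₀ ∪ K₁ := by
      rcases hw with h | h
      · exact Or.inl h.1
      · exact Or.inr h.1
    constructor
    · obtain ⟨z, hz, hzw⟩ := (hsub hw').1
      obtain ⟨u, hu, huz⟩ := (hsub (Or.inl hz)).1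
      refine ⟨u, ⟨hu, by simpa [huz] using hz⟩, ?_⟩
      simp [Function.iterate_succ, Function.comp, huz, hzw]
    · obtain ⟨z, hz, hzw⟩ := (hsub hw').2
      obtain ⟨u, hu, huz⟩ := (hsub (Or.inr hz)).2
      refine ⟨u, ⟨hu, by simpa [huz] using hz⟩, ?_⟩
      simp [Function.iterate_succ, Function.comp, huz, hzw]
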